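/- Let A, B be self-adjoint matrices on a finite-dimensional Hilbert space with 0 ≤ A, B ≤ 1, and let S: [0,1] → ℝ be continuously differentiable on (0,1) with S' strictly decreasing. Then the relative entropy admits the integral representation H(A,B) = ∫₀¹ tr |S'(B) - S'(λ)| (1(A ≥ λ) - 1(B ≥ λ))² dλ, where H(A,B) = -tr(S(A) - S(B) - S'(B)(A-B)). -/

import Mathlib

/- Relative entropy of matrices and its integral representation in terms of
spectral projections. -/

noncomputable section
open MeasureTheory
open scoped ComplexOrder

/-- Functional calculus of a Hermitian matrix through its eigendecomposition. -/
def herCFC {n : ℕ} {A : Matrix (Fin n) (Fin n) ℂ} (hA : A.IsHermitian) (g : ℝ → ℝ) :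
    Matrix (Fin n) (Fin n) ℂ :=
  (hA.eigenvectorUnitary : Matrix (Fin n) (Fin n) ℂ) *
    Matrix.diagonal (fun i => (g (hA.eigenvalues i) : ℂ)) *
    star (hA.eigenvectorUnitary : Matrix (Fin n) (Fin n) ℂ)

/-- The spectral projection `1(A ≥ λ)` of a Hermitian matrix `A`. -/
def specProj {n : ℕ} {A : Matrix (Fin n) (Fin n) ℂ} (hA : A.IsHermitian) (lam : ℝ) :
    Matrix (Fin n) (Fin n) ℂ :=
  herCFC hA (fun x => if lam ≤ x then 1 else 0)

namespace Statement12Aux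

variable {n : ℕ} {A B : Matrix (Fin n) (Fin n) ℂ}

lemma herCFC_mul (hB : B.IsHermitian) (f g : ℝ → ℝ) :
    herCFC hB f * herCFC hB g = herCFC hB (fun x => f x * g x) := by
  have h1 : (star (hB.eigenvectorUnitary : Matrix (Fin n) (Fin n) ℂ)) *
      (hB.eigenvectorUnitary : Matrix (Fin n) (Fin n) ℂ) = 1 :=
    Matrix.mem_unitaryGroup_iff'.mp hB.eigenvectorUnitary.2
  have cancel : ∀ X : Matrix (Fin n) (Fin n) ℂ,
      (star (hB.eigenvectorUnitary : Matrix (Fin n) (Fin n) ℂ)) *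
        ((hB.eigenvectorUnitary : Matrix (Fin n) (Fin n) ℂ) * X) = X := by
    intro X; rw [← Matrix.mul_assoc, h1, Matrix.one_mul]
  unfold herCFC
  simp only [Matrix.mul_assoc]
  rw [cancel, ← Matrix.mul_assoc (Matrix.diagonal _), Matrix.diagonal_mul_diagonal]
  push_cast
  rfl

lemma herCFC_one (hA : A.IsHermitian) : herCFC hA (fun _ => (1:ℝ)) = 1 := by
  have h1 : (hA.eigenvectorUnitary : Matrix (Fin n) (Fin n) ℂ) *
      (star (hA.eigenvectorUnitary : Matrix (Fin n) (Fin n) ℂ)) = 1 :=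
    Matrix.mem_unitaryGroup_iff.mp hA.eigenvectorUnitary.2
  unfold herCFC
  simp [Matrix.diagonal_one, h1]

lemma herCFC_id (hA : A.IsHermitian) : herCFC hA (fun x => x) = A := by
  have := hA.spectral_theorem
  rw [Unitary.conjStarAlgAut_apply] at this
  unfold herCFC
  exact this.symm

/-- Overlap matrix between the eigenbases of `B` and `A`. -/
def overlap (hA : A.IsHermitian) (hB : B.IsHermitian) : Matrix (Fin n) (Fin n) ℂ :=
  (star (hB.eigenvectorUnitary : Matrix (Fin n) (Fin n) ℂ)) *
    (hA.eigenvectorUnitary : Matrix (Fin n) (Fin n) ℂ)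

lemma trace_herCFC_mul (hA : A.IsHermitian) (hB : B.IsHermitian) (f g : ℝ → ℝ) :
    ((herCFC hB f * herCFC hA g).trace).re =
      ∑ j, ∑ i, Complex.normSq (overlap hA hB j i) *
        (f (hB.eigenvalues j) * g (hA.eigenvalues i)) := by
  classical
  set V : Matrix (Fin n) (Fin n) ℂ := (hB.eigenvectorUnitary : Matrix (Fin n) (Fin n) ℂ) with hV
  set U : Matrix (Fin n) (Fin n) ℂ := (hA.eigenvectorUnitary : Matrix (Fin n) (Fin n) ℂ) with hU
  have hVV : V * star V = 1 := Matrix.mem_unitaryGroup_iff.mp hB.eigenvectorUnitary.2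
  have hVV' : star V * V = 1 := Matrix.mem_unitaryGroup_iff'.mp hB.eigenvectorUnitary.2
  set Df : Matrix (Fin n) (Fin n) ℂ := Matrix.diagonal (fun j => (f (hB.eigenvalues j) : ℂ))
  set Dg : Matrix (Fin n) (Fin n) ℂ := Matrix.diagonal (fun i => (g (hA.eigenvalues i) : ℂ))
  set C : Matrix (Fin n) (Fin n) ℂ := overlap hA hB with hC
  have key : herCFC hB f * herCFC hA g = V * (Df * C * Dg * star C) * star V := by
    have hCstar : star C = star U * V := by
      rw [hC]; unfold overlap; rw [← hU, ← hV, star_mul, star_star]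
    rw [hCstar, hC]; unfold overlap herCFC
    rw [← hU, ← hV]
    simp only [Matrix.mul_assoc]
    rw [hVV, Matrix.mul_one]
  rw [key]
  have htr : (V * (Df * C * Dg * star C) * star V).trace = (Df * C * Dg * star C).trace := by
    rw [Matrix.trace_mul_comm, ← Matrix.mul_assoc, hVV', Matrix.one_mul]
  rw [htr]
  have entry : ∀ j i, (Df * C * Dg) j i
      = (f (hB.eigenvalues j) : ℂ) * C j i * (g (hA.eigenvalues i) : ℂ) := by
    intro j i; rw [Matrix.mul_diagonal, Matrix.diagonal_mul]
  have : (Df * C * Dg * star C).trace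
      = ∑ j, ∑ i, ((f (hB.eigenvalues j) * g (hA.eigenvalues i)
          * Complex.normSq (C j i) : ℝ) : ℂ) := by
    rw [Matrix.trace]
    refine Finset.sum_congr rfl fun j _ => ?_
    rw [Matrix.diag_apply, Matrix.mul_apply]
    refine Finset.sum_congr rfl fun i _ => ?_
    rw [entry j i, Matrix.star_apply, RCLike.star_def]
    calc (f (hB.eigenvalues j) : ℂ) * C j i * (g (hA.eigenvalues i) : ℂ)
          * (starRingEnd ℂ) (C j i)
        = (f (hB.eigenvalues j) : ℂ) * (g (hA.eigenvalues i) : ℂ)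
          * (C j i * (starRingEnd ℂ) (C j i)) := by ring
      _ = _ := by rw [Complex.mul_conj]; push_cast; ring
  rw [this, Complex.re_sum]
  refine Finset.sum_congr rfl fun j _ => ?_
  rw [Complex.re_sum]
  refine Finset.sum_congr rfl fun i _ => ?_
  rw [Complex.ofReal_re]
  ring

lemma overlap_row_sum (hA : A.IsHermitian) (hB : B.IsHermitian) (j : Fin n) :
    ∑ i, Complex.normSq (overlap hA hB j i) = 1 := by
  classical
  have hU : overlap hA hB * star (overlap hA hB) = 1 := by
    unfold overlap
    rw [star_mul, star_star, Matrix.mul_assoc, ← Matrix.mul_assoc _ (star _) _,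
      Matrix.mem_unitaryGroup_iff.mp hA.eigenvectorUnitary.2, Matrix.one_mul,
      Matrix.mem_unitaryGroup_iff'.mp hB.eigenvectorUnitary.2]
  have := congrArg (fun M : Matrix (Fin n) (Fin n) ℂ => M j j) hU
  simp only [Matrix.mul_apply, Matrix.star_apply, RCLike.star_def, Matrix.one_apply_eq] at this
  have h2 : (∑ i, ((Complex.normSq (overlap hA hB j i) : ℝ) : ℂ)) = 1 := by
    rw [← this]
    refine Finset.sum_congr rfl fun i _ => ?_
    rw [← Complex.mul_conj]
  have := congrArg Complex.re h2
  rwa [Complex.re_sum, Complex.one_re] at this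

end Statement12Aux

namespace Statement12Aux

section Scalar

variable {S S' : ℝ → ℝ}

lemma ftc (hScont : ContinuousOn S (Set.Icc 0 1))
    (hderiv : ∀ x ∈ Set.Ioo (0:ℝ) 1, HasDerivAt S (S' x) x)
    (hSint : IntervalIntegrable S' volume 0 1)
    {a b : ℝ} (h0 : 0 ≤ a) (hab : a ≤ b) (hb1 : b ≤ 1) :
    ∫ x in a..b, S' x = S b - S a := by
  refine intervalIntegral.integral_eq_sub_of_hasDeriv_right_of_le hab
    (hScont.mono (Set.Icc_subset_Icc h0 hb1)) (fun x hx => ?_) (hSint.mono_set ?_)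
  · exact (hderiv x ⟨lt_of_le_of_lt h0 hx.1, lt_of_lt_of_le hx.2 hb1⟩).hasDerivWithinAt
  · rw [Set.uIcc_of_le hab, Set.uIcc_of_le zero_le_one]
    exact Set.Icc_subset_Icc h0 hb1

lemma indicator_eq (S' : ℝ → ℝ) (a b lam : ℝ) :
    |S' b - S' lam| * ((if lam ≤ a then (1:ℝ) else 0) - (if lam ≤ b then 1 else 0))^2
      = Set.indicator (Set.Ioc (min a b) (max a b)) (fun x => |S' b - S' x|) lam := by
  rcases le_total a b with hab | hab
  · rw [min_eq_left hab, max_eq_right hab]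
    by_cases h1 : lam ≤ a
    · rw [Set.indicator_of_notMem (fun h => absurd h1 h.1.not_ge), if_pos h1,
        if_pos (h1.trans hab)]
      ring
    · by_cases h2 : lam ≤ b
      · rw [Set.indicator_of_mem (Set.mem_Ioc.mpr ⟨lt_of_not_ge h1, h2⟩), if_neg h1, if_pos h2]
        ring
      · rw [Set.indicator_of_notMem (fun h => h2 h.2), if_neg h1, if_neg h2]
        ring
  · rw [min_eq_right hab, max_eq_left hab]
    by_cases h2 : lam ≤ b
    · rw [Set.indicator_of_notMem (fun h => absurd h2 h.1.not_ge), if_pos h2,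
        if_pos (h2.trans hab)]
      ring
    · by_cases h1 : lam ≤ a
      · rw [Set.indicator_of_mem (Set.mem_Ioc.mpr ⟨lt_of_not_ge h2, h1⟩), if_pos h1, if_neg h2]
        ring
      · rw [Set.indicator_of_notMem (fun h => h1 h.2), if_neg h1, if_neg h2]
        ring

lemma intervalIntegrable_finset_sum' {ι : Type*} (s : Finset ι) {f : ι → ℝ → ℝ} {a b : ℝ}
    (h : ∀ i ∈ s, IntervalIntegrable (f i) volume a b) :
    IntervalIntegrable (fun x => ∑ i ∈ s, f i x) volume a b := by
  classical
  induction s using Finset.induction with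
  | empty => simpa using intervalIntegrable_const (c := (0:ℝ))
  | @insert j t hnotmem ih =>
    simp only [Finset.sum_insert hnotmem]
    exact (h j (Finset.mem_insert_self j t)).add
      (ih fun i hi => h i (Finset.mem_insert_of_mem hi))

lemma scalar_integrable (hSint : IntervalIntegrable S' volume 0 1) (a b : ℝ) :
    IntervalIntegrable (fun lam => |S' b - S' lam| *
      ((if lam ≤ a then (1:ℝ) else 0) - (if lam ≤ b then 1 else 0))^2) volume 0 1 := by
  have habs : IntervalIntegrable (fun lam => |S' b - S' lam|) volume 0 1 :=
    (intervalIntegrable_const.sub hSint).abs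
  have heq : (fun lam => |S' b - S' lam| *
      ((if lam ≤ a then (1:ℝ) else 0) - (if lam ≤ b then 1 else 0))^2)
      = Set.indicator (Set.Ioc (min a b) (max a b)) (fun x => |S' b - S' x|) :=
    funext (indicator_eq S' a b)
  rw [heq, intervalIntegrable_iff] at *
  exact habs.indicator measurableSet_Ioc

lemma scalar_eq (hScont : ContinuousOn S (Set.Icc 0 1))
    (hderiv : ∀ x ∈ Set.Ioo (0:ℝ) 1, HasDerivAt S (S' x) x)
    (hanti : StrictAntiOn S' (Set.Icc 0 1))
    (hSint : IntervalIntegrable S' volume 0 1)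
    {a b : ℝ} (ha : a ∈ Set.Icc (0:ℝ) 1) (hb : b ∈ Set.Icc (0:ℝ) 1) :
    ∫ lam in (0:ℝ)..1, |S' b - S' lam| *
        ((if lam ≤ a then (1:ℝ) else 0) - (if lam ≤ b then 1 else 0))^2
      = -(S a - S b - S' b * (a - b)) := by
  have hsub : Set.Ioc (min a b) (max a b) ⊆ Set.Ioc 0 1 :=
    Set.Ioc_subset_Ioc (le_min ha.1 hb.1) (max_le ha.2 hb.2)
  have h1 : ∫ lam in (0:ℝ)..1, |S' b - S' lam| *
        ((if lam ≤ a then (1:ℝ) else 0) - (if lam ≤ b then 1 else 0))^2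
      = ∫ lam in (min a b)..(max a b), |S' b - S' lam| := by
    simp only [indicator_eq S' a b]
    rw [intervalIntegral.integral_of_le zero_le_one,
      MeasureTheory.setIntegral_indicator measurableSet_Ioc,
      Set.inter_eq_self_of_subset_right hsub,
      ← intervalIntegral.integral_of_le min_le_max]
  rw [h1]
  rcases le_total a b with hab | hab
  · rw [min_eq_left hab, max_eq_right hab]
    have h2 : ∫ lam in a..b, |S' b - S' lam| = ∫ lam in a..b, (S' lam - S' b) := by
      refine intervalIntegral.integral_congr fun x hx => ?_
      rw [Set.uIcc_of_le hab] at hx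
      have hx01 : x ∈ Set.Icc (0:ℝ) 1 := ⟨le_trans ha.1 hx.1, le_trans hx.2 hb.2⟩
      have : S' b ≤ S' x := hanti.antitoneOn hx01 hb hx.2
      rw [abs_sub_comm, abs_of_nonneg (sub_nonneg.mpr this)]
    have hint : IntervalIntegrable S' volume a b := by
      refine hSint.mono_set ?_
      rw [Set.uIcc_of_le hab, Set.uIcc_of_le zero_le_one]
      exact Set.Icc_subset_Icc ha.1 hb.2
    rw [h2, intervalIntegral.integral_sub hint intervalIntegrable_const,
      ftc hScont hderiv hSint ha.1 hab hb.2, intervalIntegral.integral_const, smul_eq_mul]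
    ring
  · rw [min_eq_right hab, max_eq_left hab]
    have h2 : ∫ lam in b..a, |S' b - S' lam| = ∫ lam in b..a, (S' b - S' lam) := by
      refine intervalIntegral.integral_congr fun x hx => ?_
      rw [Set.uIcc_of_le hab] at hx
      have hx01 : x ∈ Set.Icc (0:ℝ) 1 := ⟨le_trans hb.1 hx.1, le_trans hx.2 ha.2⟩
      have : S' x ≤ S' b := hanti.antitoneOn hb hx01 hx.1
      rw [abs_of_nonneg (sub_nonneg.mpr this)]
    have hint : IntervalIntegrable S' volume b a := by
      refine hSint.mono_set ?_
      rw [Set.uIcc_of_le hab, Set.uIcc_of_le zero_le_one]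
      exact Set.Icc_subset_Icc hb.1 ha.2
    rw [h2, intervalIntegral.integral_sub intervalIntegrable_const hint,
      ftc hScont hderiv hSint hb.1 hab ha.2, intervalIntegral.integral_const, smul_eq_mul]
    ring

end Scalar

end Statement12Aux

namespace Statement12Aux

variable {n : ℕ} {A B : Matrix (Fin n) (Fin n) ℂ}

lemma eig_mem (hA : A.IsHermitian) (hA0 : A.PosSemidef)
    (hA1 : ((1 : Matrix (Fin n) (Fin n) ℂ) - A).PosSemidef) (i : Fin n) :
    hA.eigenvalues i ∈ Set.Icc (0:ℝ) 1 := by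
  refine ⟨hA0.eigenvalues_nonneg i, ?_⟩
  set V : Matrix (Fin n) (Fin n) ℂ := (hA.eigenvectorUnitary : Matrix (Fin n) (Fin n) ℂ) with hV
  have hps := hA1.conjTranspose_mul_mul_same V
  have hd : star V * ((1 : Matrix (Fin n) (Fin n) ℂ) - A) * V
      = Matrix.diagonal (fun j => (1:ℂ) - (hA.eigenvalues j : ℂ)) := by
    have hdiag : star V * A * V = Matrix.diagonal (RCLike.ofReal ∘ hA.eigenvalues) :=
      by have := hA.conjStarAlgAut_star_eigenvectorUnitary
         rw [Unitary.conjStarAlgAut_star_apply] at this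
         exact this
    have hVV' : star V * V = 1 := Matrix.mem_unitaryGroup_iff'.mp hA.eigenvectorUnitary.2
    rw [Matrix.mul_sub, Matrix.mul_one, Matrix.sub_mul,
      hdiag, hVV', ← Matrix.diagonal_one, Matrix.diagonal_sub]
    rfl
  rw [← Matrix.star_eq_conjTranspose V, hd] at hps
  have h0 := Matrix.posSemidef_diagonal_iff.mp hps i
  have h1 : (0:ℂ) ≤ ((1 - hA.eigenvalues i : ℝ) : ℂ) := by push_cast; exact h0
  have := Complex.zero_le_real.mp h1
  linarith

end Statement12Aux

namespace Statement12Aux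

variable {n : ℕ} {A B : Matrix (Fin n) (Fin n) ℂ}

lemma integrand_eq (hA : A.IsHermitian) (hB : B.IsHermitian) (S' : ℝ → ℝ) (lam : ℝ) :
    ((herCFC hB (fun x => |S' x - S' lam|) *
        ((specProj hA lam - specProj hB lam) *
          (specProj hA lam - specProj hB lam))).trace).re
      = ∑ j, ∑ i, Complex.normSq (overlap hA hB j i) *
          (|S' (hB.eigenvalues j) - S' lam| *
            ((if lam ≤ hA.eigenvalues i then (1:ℝ) else 0) -
             (if lam ≤ hB.eigenvalues j then (1:ℝ) else 0))^2) := by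
  classical
  simp only [specProj]
  set g : ℝ → ℝ := fun x => |S' x - S' lam| with hg
  set p : ℝ → ℝ := fun x => if lam ≤ x then (1:ℝ) else 0 with hp
  have hQ : (herCFC hA p - herCFC hB p) * (herCFC hA p - herCFC hB p)
      = herCFC hA p * herCFC hA p - herCFC hA p * herCFC hB p
        - herCFC hB p * herCFC hA p + herCFC hB p * herCFC hB p := by
    noncomm_ring
  rw [hQ, mul_add, mul_sub, mul_sub, Matrix.trace_add, Matrix.trace_sub, Matrix.trace_sub,
    Complex.add_re, Complex.sub_re, Complex.sub_re]
  have t1 : ((herCFC hB g * (herCFC hA p * herCFC hA p)).trace).re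
      = ∑ j, ∑ i, Complex.normSq (overlap hA hB j i) *
          (g (hB.eigenvalues j) * (p (hA.eigenvalues i) * p (hA.eigenvalues i))) := by
    rw [herCFC_mul hA p p]
    exact trace_herCFC_mul hA hB _ _
  have t2 : ((herCFC hB g * (herCFC hA p * herCFC hB p)).trace).re
      = ∑ j, ∑ i, Complex.normSq (overlap hA hB j i) *
          ((p (hB.eigenvalues j) * g (hB.eigenvalues j)) * p (hA.eigenvalues i)) := by
    have : (herCFC hB g * (herCFC hA p * herCFC hB p)).trace
        = (herCFC hB (fun x => p x * g x) * herCFC hA p).trace := by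
      rw [← mul_assoc, Matrix.trace_mul_comm, ← mul_assoc, herCFC_mul hB p g]
    rw [this]
    exact trace_herCFC_mul hA hB _ _
  have t3 : ((herCFC hB g * (herCFC hB p * herCFC hA p)).trace).re
      = ∑ j, ∑ i, Complex.normSq (overlap hA hB j i) *
          ((g (hB.eigenvalues j) * p (hB.eigenvalues j)) * p (hA.eigenvalues i)) := by
    have : herCFC hB g * (herCFC hB p * herCFC hA p)
        = herCFC hB (fun x => g x * p x) * herCFC hA p := by
      rw [← mul_assoc, herCFC_mul hB g p]
    rw [this]
    exact trace_herCFC_mul hA hB _ _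
  have t4 : ((herCFC hB g * (herCFC hB p * herCFC hB p)).trace).re
      = ∑ j, ∑ i, Complex.normSq (overlap hA hB j i) *
          ((g (hB.eigenvalues j) * (p (hB.eigenvalues j) * p (hB.eigenvalues j))) * 1) := by
    have : herCFC hB g * (herCFC hB p * herCFC hB p)
        = herCFC hB (fun x => g x * (p x * p x)) * herCFC hA (fun _ => (1:ℝ)) := by
      rw [herCFC_mul hB p p, herCFC_mul hB g _, herCFC_one hA, mul_one]
    rw [this]
    exact trace_herCFC_mul hA hB _ _
  rw [t1, t2, t3, t4]
  rw [← Finset.sum_sub_distrib, ← Finset.sum_sub_distrib, ← Finset.sum_add_distrib]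
  refine Finset.sum_congr rfl fun j _ => ?_
  rw [← Finset.sum_sub_distrib, ← Finset.sum_sub_distrib, ← Finset.sum_add_distrib]
  refine Finset.sum_congr rfl fun i _ => ?_
  ring

lemma lhs_eq (hA : A.IsHermitian) (hB : B.IsHermitian) (S S' : ℝ → ℝ) :
    ((herCFC hA S - herCFC hB S - herCFC hB S' * (A - B)).trace).re
      = ∑ j, ∑ i, Complex.normSq (overlap hA hB j i) *
          (S (hA.eigenvalues i) - S (hB.eigenvalues j)
            - S' (hB.eigenvalues j) * (hA.eigenvalues i - hB.eigenvalues j)) := by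
  classical
  rw [mul_sub, Matrix.trace_sub, Matrix.trace_sub, Matrix.trace_sub,
    Complex.sub_re, Complex.sub_re, Complex.sub_re]
  have t1 : ((herCFC hA S).trace).re
      = ∑ j, ∑ i, Complex.normSq (overlap hA hB j i) * ((1:ℝ) * S (hA.eigenvalues i)) := by
    rw [← one_mul (herCFC hA S), ← herCFC_one hB]
    exact trace_herCFC_mul hA hB _ _
  have t2 : ((herCFC hB S).trace).re
      = ∑ j, ∑ i, Complex.normSq (overlap hA hB j i) * (S (hB.eigenvalues j) * 1) := by
    rw [← mul_one (herCFC hB S), ← herCFC_one hA]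
    exact trace_herCFC_mul hA hB _ _
  have t3 : ((herCFC hB S' * A).trace).re
      = ∑ j, ∑ i, Complex.normSq (overlap hA hB j i) *
          (S' (hB.eigenvalues j) * hA.eigenvalues i) := by
    have : herCFC hB S' * A = herCFC hB S' * herCFC hA (fun x => x) := by
      rw [herCFC_id hA]
    rw [this]
    exact trace_herCFC_mul hA hB _ _
  have t4 : ((herCFC hB S' * B).trace).re
      = ∑ j, ∑ i, Complex.normSq (overlap hA hB j i) *
          ((S' (hB.eigenvalues j) * hB.eigenvalues j) * 1) := by
    have h5 : herCFC hB S' * herCFC hB (fun x => x) = herCFC hB (fun x => S' x * x) :=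
      herCFC_mul hB S' (fun x => x)
    have : herCFC hB S' * B = herCFC hB (fun x => S' x * x) * herCFC hA (fun _ => (1:ℝ)) := by
      rw [herCFC_one hA, mul_one, ← h5, herCFC_id hB]
    rw [this]
    exact trace_herCFC_mul hA hB _ _
  rw [t1, t2, t3, t4]
  rw [← Finset.sum_sub_distrib, ← Finset.sum_sub_distrib, ← Finset.sum_sub_distrib]
  refine Finset.sum_congr rfl fun j _ => ?_
  rw [← Finset.sum_sub_distrib, ← Finset.sum_sub_distrib, ← Finset.sum_sub_distrib]
  refine Finset.sum_congr rfl fun i _ => ?_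
  ring

end Statement12Aux


set_option maxHeartbeats 1000000 in
open Statement12Aux in
/-- integral representation of the relative entropy.  For
self-adjoint matrices `0 ≤ A, B ≤ 1` and `S` continuous on `[0,1]`, differentiable
on `(0,1)` with strictly decreasing derivative `S'`,
`H(A,B) = -tr(S(A) - S(B) - S'(B)(A-B))
        = ∫₀¹ tr |S'(B) - S'(λ)| (1(A ≥ λ) - 1(B ≥ λ))² dλ`. -/
theorem statement12 (n : ℕ) (S S' : ℝ → ℝ)
    (hScont : ContinuousOn S (Set.Icc 0 1))
    (hderiv : ∀ x ∈ Set.Ioo (0:ℝ) 1, HasDerivAt S (S' x) x)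
    (hanti : StrictAntiOn S' (Set.Icc 0 1))
    (hSint : IntervalIntegrable S' volume 0 1)
    (A B : Matrix (Fin n) (Fin n) ℂ) (hA : A.IsHermitian) (hB : B.IsHermitian)
    (hA0 : A.PosSemidef) (hA1 : ((1 : Matrix (Fin n) (Fin n) ℂ) - A).PosSemidef)
    (hB0 : B.PosSemidef) (hB1 : ((1 : Matrix (Fin n) (Fin n) ℂ) - B).PosSemidef) :
    -((herCFC hA S - herCFC hB S - herCFC hB S' * (A - B)).trace.re) =
      ∫ lam in (0:ℝ)..1,
        ((herCFC hB (fun x => |S' x - S' lam|) *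
          ((specProj hA lam - specProj hB lam) *
            (specProj hA lam - specProj hB lam))).trace).re := by
  classical
  set F : Fin n → Fin n → ℝ → ℝ := fun j i lam =>
    Complex.normSq (overlap hA hB j i) *
      (|S' (hB.eigenvalues j) - S' lam| *
        ((if lam ≤ hA.eigenvalues i then (1:ℝ) else 0) -
         (if lam ≤ hB.eigenvalues j then (1:ℝ) else 0))^2) with hF
  have hInt : ∀ j i, IntervalIntegrable (F j i) volume 0 1 :=
    fun j i => (scalar_integrable hSint _ _).const_mul _
  have e1 : ∀ lam, ((herCFC hB (fun x => |S' x - S' lam|) *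
        ((specProj hA lam - specProj hB lam) *
          (specProj hA lam - specProj hB lam))).trace).re = ∑ j, ∑ i, F j i lam :=
    fun lam => integrand_eq hA hB S' lam
  have e2 : (∫ lam in (0:ℝ)..1,
        ((herCFC hB (fun x => |S' x - S' lam|) *
          ((specProj hA lam - specProj hB lam) *
            (specProj hA lam - specProj hB lam))).trace).re)
      = ∑ j, ∑ i, ∫ lam in (0:ℝ)..1, F j i lam := by
    have e2a : (∫ lam in (0:ℝ)..1, ∑ j, ∑ i, F j i lam)
        = ∑ j, ∫ lam in (0:ℝ)..1, ∑ i, F j i lam :=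
      intervalIntegral.integral_finset_sum
        (fun j _ => intervalIntegrable_finset_sum' Finset.univ (fun i _ => hInt j i))
    have e2b : ∀ j : Fin n, (∫ lam in (0:ℝ)..1, ∑ i, F j i lam)
        = ∑ i, ∫ lam in (0:ℝ)..1, F j i lam :=
      fun j => intervalIntegral.integral_finset_sum (fun i _ => hInt j i)
    rw [intervalIntegral.integral_congr (g := fun lam => ∑ j, ∑ i, F j i lam)
        (fun lam _ => e1 lam), e2a]
    exact Finset.sum_congr rfl fun j _ => e2b j
  have e3 : ∀ j i, (∫ lam in (0:ℝ)..1, F j i lam)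
      = Complex.normSq (overlap hA hB j i) *
        -(S (hA.eigenvalues i) - S (hB.eigenvalues j)
          - S' (hB.eigenvalues j) * (hA.eigenvalues i - hB.eigenvalues j)) := by
    intro j i
    rw [hF]
    rw [intervalIntegral.integral_const_mul,
      scalar_eq hScont hderiv hanti hSint (eig_mem hA hA0 hA1 i) (eig_mem hB hB0 hB1 j)]
  rw [e2, lhs_eq hA hB S S', ← Finset.sum_neg_distrib]
  refine Finset.sum_congr rfl fun j _ => ?_
  rw [← Finset.sum_neg_distrib]
  refine Finset.sum_congr rfl fun i _ => ?_
  rw [e3 j i]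
  ring
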